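/- Suppose there exist infinitely many primes p such that there is no prime strictly between (p−1)² and p². Then M(x) − π(x) tends to infinity as x → ∞. -/
import Mathlib


open scoped BigOperators

/-- `M A` is the largest cardinality of a subset of `A` on which the Euler totient
function is nondecreasing. -/
noncomputable def M (A : Set ℕ) : ℕ :=
  sSup {k : ℕ | ∃ B : Finset ℕ, ↑B ⊆ A ∧
    (∀ m ∈ B, ∀ n ∈ B, m ≤ n → Nat.totient m ≤ Nat.totient n) ∧ B.card = k}

/-- `Mx x = M([x])` where `[x] = {n : ℕ | 1 ≤ n ≤ x}`. -/
noncomputable def Mx (x : ℝ) : ℕ := M {n : ℕ | 1 ≤ n ∧ (n : ℝ) ≤ x}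

/-- The number of primes up to the real number `x`. -/
noncomputable def primePi (x : ℝ) : ℕ := {p : ℕ | p.Prime ∧ (p : ℝ) ≤ x}.ncard


open scoped BigOperators

private lemma prime_sq_not_prime {p : ℕ} (hp : p.Prime) : ¬ (p^2).Prime := by
  intro h
  rcases (Nat.Prime.eq_one_or_self_of_dvd h p ⟨p, by ring⟩) with h1 | h1
  · exact hp.one_lt.ne' h1
  · nlinarith [hp.two_le]

private lemma key_bound (x : ℝ) (hx : (1:ℝ) ≤ x) (F : Finset ℕ)
    (hF : ∀ p ∈ F, p.Prime ∧ ∀ q : ℕ, (p - 1) ^ 2 < q → q < p ^ 2 → ¬q.Prime)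
    (hFx : ∀ p ∈ F, ((p:ℝ))^2 ≤ x) :
    primePi x + F.card + 1 ≤ Mx x := by
  classical
  have hPfin : {p : ℕ | p.Prime ∧ (p : ℝ) ≤ x}.Finite := by
    apply Set.Finite.subset (Set.finite_Icc 0 ⌊x⌋₊)
    rintro p ⟨-, hpx⟩
    exact ⟨Nat.zero_le _, Nat.le_floor hpx⟩
  set Pf : Finset ℕ := hPfin.toFinset with hPf
  set B : Finset ℕ := insert 1 (Pf ∪ F.image (· ^ 2)) with hB
  -- characterize membership of B
  have hmemB : ∀ n, n ∈ B ↔ n = 1 ∨ (n.Prime ∧ (n:ℝ) ≤ x) ∨ ∃ p ∈ F, p ^ 2 = n := by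
    intro n
    simp [hB, hPf, Set.Finite.mem_toFinset, Finset.mem_image]
  have hBsub : ↑B ⊆ {n : ℕ | 1 ≤ n ∧ (n : ℝ) ≤ x} := by
    intro n hn
    rw [Finset.mem_coe, hmemB] at hn
    rcases hn with rfl | ⟨hp, hpx⟩ | ⟨p, hpF, rfl⟩
    · exact ⟨le_refl 1, by exact_mod_cast hx⟩
    · exact ⟨hp.one_lt.le, hpx⟩
    · refine ⟨Nat.one_le_iff_ne_zero.2 ?_, by push_cast; exact hFx p hpF⟩
      have := (hF p hpF).1.two_le; positivity
  have htot_sq : ∀ p : ℕ, p.Prime → Nat.totient (p ^ 2) = p * (p - 1) := by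
    intro p hp
    rw [Nat.totient_prime_pow hp (by norm_num)]
    simp
  have hmono : ∀ m ∈ B, ∀ n ∈ B, m ≤ n → Nat.totient m ≤ Nat.totient n := by
    intro m hm n hn hmn
    rw [hmemB] at hm hn
    have hpos : ∀ k, k ∈ B → 1 ≤ Nat.totient k := by
      intro k hk
      exact Nat.totient_pos.2 (hBsub hk).1
    rcases hm with rfl | ⟨hmp, hmx⟩ | ⟨p, hpF, rfl⟩
    · -- m = 1
      simpa using hpos n (by rw [hmemB]; exact hn)
    · -- m prime
      rcases hn with rfl | ⟨hnp, hnx⟩ | ⟨r, hrF, rfl⟩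
      · exact absurd hmn (by simpa using hmp.one_lt)
      · rw [Nat.totient_prime hmp, Nat.totient_prime hnp]; omega
      · -- m prime ≤ r^2
        obtain ⟨hrp, hrleg⟩ := hF r hrF
        have hne : m ≠ r ^ 2 := fun he => prime_sq_not_prime hrp (he ▸ hmp)
        have hlt : m < r ^ 2 := lt_of_le_of_ne hmn hne
        have hle : m ≤ (r - 1) ^ 2 := by
          by_contra hgt
          exact hrleg m (by omega) hlt hmp
        rw [Nat.totient_prime hmp, htot_sq r hrp]
        have h2 := hrp.two_le
        have : (r - 1) ^ 2 ≤ r * (r - 1) := by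
          have : (r-1) * (r-1) ≤ r * (r-1) := Nat.mul_le_mul_right _ (by omega)
          simpa [pow_two] using this
        omega
    · -- m = p^2
      obtain ⟨hpp, -⟩ := hF p hpF
      have h2p := hpp.two_le
      rcases hn with rfl | ⟨hnp, hnx⟩ | ⟨r, hrF, rfl⟩
      · exact absurd hmn (by nlinarith)
      · -- p^2 ≤ n prime
        have hne : p ^ 2 ≠ n := fun he => prime_sq_not_prime hpp (he ▸ hnp)
        have hlt : p ^ 2 < n := lt_of_le_of_ne hmn hne
        rw [htot_sq p hpp, Nat.totient_prime hnp]
        have : p * (p - 1) < p ^ 2 := by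
          have h := Nat.sub_add_cancel (show 1 ≤ p by omega)
          nlinarith [h]
        omega
      · -- p^2 ≤ r^2
        obtain ⟨hrp, -⟩ := hF r hrF
        have h2r := hrp.two_le
        have hpr : p ≤ r := by nlinarith
        rw [htot_sq p hpp, htot_sq r hrp]
        exact Nat.mul_le_mul hpr (by omega)
  -- cardinality of B
  have himgcard : (F.image (· ^ 2)).card = F.card :=
    Finset.card_image_of_injective _ (fun a b hab => Nat.pow_left_injective (by norm_num) hab)
  have hdisj : Disjoint Pf (F.image (· ^ 2)) := by
    rw [Finset.disjoint_left]
    intro a ha hb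
    rw [hPf, Set.Finite.mem_toFinset] at ha
    obtain ⟨p, hpF, rfl⟩ := Finset.mem_image.1 hb
    exact prime_sq_not_prime (hF p hpF).1 ha.1
  have h1notin : (1 : ℕ) ∉ Pf ∪ F.image (· ^ 2) := by
    rw [Finset.mem_union]
    rintro (h1 | h1)
    · rw [hPf, Set.Finite.mem_toFinset] at h1
      exact Nat.not_prime_one h1.1
    · obtain ⟨p, hpF, he⟩ := Finset.mem_image.1 h1
      have := (hF p hpF).1.two_le
      nlinarith
  have hcard : B.card = primePi x + F.card + 1 := by
    rw [hB, Finset.card_insert_of_notMem h1notin, Finset.card_union_of_disjoint hdisj,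
      himgcard, primePi, Set.ncard_eq_toFinset_card _ hPfin]
  -- conclude via sSup
  have hbdd : BddAbove {k : ℕ | ∃ B : Finset ℕ, ↑B ⊆ {n : ℕ | 1 ≤ n ∧ (n : ℝ) ≤ x} ∧
      (∀ m ∈ B, ∀ n ∈ B, m ≤ n → Nat.totient m ≤ Nat.totient n) ∧ B.card = k} := by
    refine ⟨⌊x⌋₊ + 1, ?_⟩
    rintro k ⟨C, hC, -, rfl⟩
    have : C ⊆ Finset.range (⌊x⌋₊ + 1) := by
      intro n hn
      have := hC hn
      exact Finset.mem_range.2 (Nat.lt_succ_of_le (Nat.le_floor this.2))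
    calc C.card ≤ (Finset.range (⌊x⌋₊ + 1)).card := Finset.card_le_card this
      _ = ⌊x⌋₊ + 1 := Finset.card_range _
  have : B.card ≤ Mx x := le_csSup hbdd ⟨B, hBsub, hmono, rfl⟩
  omega

/-- If Legendre's conjecture fails for infinitely many primes `p` (no prime strictly between
`(p-1)²` and `p²`), then `M(x) - π(x) → ∞` as `x → ∞`. -/
theorem stmt11
    (h : {p : ℕ | p.Prime ∧ ∀ q : ℕ, (p - 1) ^ 2 < q → q < p ^ 2 → ¬q.Prime}.Infinite) :
    Filter.Tendsto (fun x : ℝ => (Mx x : ℤ) - (primePi x : ℤ)) Filter.atTop Filter.atTop := by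
  rw [Filter.tendsto_atTop]
  intro b
  obtain ⟨F, hFsub, hFcard⟩ := h.exists_subset_card_eq b.toNat
  rw [Filter.eventually_atTop]
  refine ⟨max 1 (∑ p ∈ F, ((p:ℝ))^2 + 1), fun x hxge => ?_⟩
  have hx1 : (1:ℝ) ≤ x := le_trans (le_max_left _ _) hxge
  have hFx : ∀ p ∈ F, ((p:ℝ))^2 ≤ x := by
    intro p hp
    have h1 : ((p:ℝ))^2 ≤ ∑ q ∈ F, ((q:ℝ))^2 :=
      Finset.single_le_sum (f := fun q : ℕ => ((q:ℝ))^2) (fun q _ => sq_nonneg _) hp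
    have h2 : (∑ q ∈ F, ((q:ℝ))^2 + 1) ≤ x := le_trans (le_max_right _ _) hxge
    linarith
  have hkey := key_bound x hx1 F (fun p hp => hFsub hp) hFx
  rw [hFcard] at hkey
  have hb := Int.self_le_toNat b
  omega
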